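/- Chern connection for fgp modules (uniqueness): Let E be a finitely generated projective left A-module with holomorphic structure ∂̄_E and nondegenerate hermitian inner product ⟨,⟩: E ⊗ conj(E) → A. Then there is a unique left connection ∇_E: E → Ω¹ ⊗_A E preserving the hermitian metric and with (π^{0,1} ⊗ id)∇_E = ∂̄_E; in Christoffel symbol form, if Γ = Γ₊ + Γ₋ with Γ₋ determined by ∂̄_E, then −Γ₊ = ∂g• · g• + g• (Γ₋)* g• (i.e. −Γ₊ = ∂g^∙ g_∙ + g^∙ Γ₋* g_∙). -/

import Mathlib

open Finset in
/-- Chern connection for fgp modules, in Christoffel symbol form.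
A is a *-algebra with Ω¹ = Ω^{1,0} ⊕ Ω^{0,1}, and E a fgp left module with dual basis
giving projection matrix P, metric matrices g^∙ = gU, g_∙ = gL (gU gL = P, gL P = gL,
P gU = gU, (g^∙)* = g^∙), and Christoffel symbols Γ = Γ₊ + Γ₋ with Γ₋ determined by
the holomorphic structure ∂̄_E.  If the connection preserves the hermitian metric
(its (1,0)-component `hpres`) and Γ₊ P = Γ₊, then Γ₊ is uniquely determined:
−Γ₊ = ∂g^∙ · g_∙ + g^∙ · (Γ₋)* · g_∙. -/
theorem stmt17 (n : ℕ)
    (A : Type*) [Ring A] [StarRing A] [Algebra ℂ A]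
    (Ω10 Ω01 : Type*) [AddCommGroup Ω10] [Module ℂ Ω10] [AddCommGroup Ω01] [Module ℂ Ω01]
    (l10 r10 : A → Ω10 →ₗ[ℂ] Ω10) (l01 r01 : A → Ω01 →ₗ[ℂ] Ω01)
    (hl1 : ∀ ω, l10 1 ω = ω) (hr1 : ∀ ω, r10 1 ω = ω)
    (hlmul : ∀ a b ω, l10 (a * b) ω = l10 a (l10 b ω))
    (hrmul : ∀ a b ω, r10 (a * b) ω = r10 b (r10 a ω))
    (hladd : ∀ a b ω, l10 (a + b) ω = l10 a ω + l10 b ω)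
    (hradd : ∀ a b ω, r10 (a + b) ω = r10 a ω + r10 b ω)
    (hcomm : ∀ a b ω, l10 a (r10 b ω) = r10 b (l10 a ω))
    (starΩ : Ω01 → Ω10)
    (hstar_add : ∀ ξ η, starΩ (ξ + η) = starΩ ξ + starΩ η)
    (hstar_l : ∀ a ξ, starΩ (l01 a ξ) = r10 (star a) (starΩ ξ))
    (hstar_r : ∀ a ξ, starΩ (r01 a ξ) = l10 (star a) (starΩ ξ))
    (pd : A → Ω10)  -- the holomorphic differential ∂ : A → Ω^{1,0}
    (hpd_add : ∀ a b, pd (a + b) = pd a + pd b)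
    (hpdLeib : ∀ a b, pd (a * b) = l10 a (pd b) + r10 b (pd a))
    (P gU gL : Matrix (Fin n) (Fin n) A)
    (hP : P * P = P) (hgUgL : gU * gL = P) (hgLP : gL * P = gL) (hPgU : P * gU = gU)
    (hgstar : ∀ i j, star (gU i j) = gU j i)
    (Γp : Matrix (Fin n) (Fin n) Ω10) (Γm : Matrix (Fin n) (Fin n) Ω01)
    (hΓpP : ∀ i j, ∑ a, r10 (P a j) (Γp i a) = Γp i j)
    -- the (1,0)-component of metric preservation: ∂g^{ij} = −Γ₊^i_a g^{aj} − g^{ia}(Γ₋^j_a)*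
    (hpres : ∀ i j, pd (gU i j)
        = -(∑ a, r10 (gU a j) (Γp i a)) - ∑ a, l10 (gU i a) (starΩ (Γm j a))) :
    ∀ i j, Γp i j
        = -(∑ a, r10 (gL a j) (pd (gU i a)))
          - ∑ a, ∑ b, r10 (gL b j) (l10 (gU i a) (starΩ (Γm b a))) := by
  intro i j
  have hr0 : ∀ ω : Ω10, r10 0 ω = 0 := by
    intro ω
    have h := hradd 0 0 ω
    rw [add_zero] at h
    exact (left_eq_add.mp h)
  have hr_sum : ∀ (f : Fin n → A) (ω : Ω10),
      r10 (∑ a, f a) ω = ∑ a, r10 (f a) ω := by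
    intro f ω
    induction (Finset.univ : Finset (Fin n)) using Finset.induction with
    | empty => simpa using hr0 ω
    | insert _ _ hx ih =>
        rw [Finset.sum_insert hx, Finset.sum_insert hx, hradd, ih]
  -- expand pd (gU i a) using hpres
  have key : (∑ a, r10 (gL a j) (pd (gU i a)))
      = -(∑ a, ∑ c, r10 (gL a j) (r10 (gU c a) (Γp i c)))
        - ∑ a, ∑ c, r10 (gL a j) (l10 (gU i c) (starΩ (Γm a c))) := by
    rw [← Finset.sum_neg_distrib, ← Finset.sum_sub_distrib]
    refine Finset.sum_congr rfl fun a _ => ?_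
    rw [hpres i a, map_sub, map_neg, map_sum, map_sum]
  have cancel : (∑ a, ∑ c, r10 (gL a j) (l10 (gU i c) (starΩ (Γm a c))))
      = ∑ a, ∑ b, r10 (gL b j) (l10 (gU i a) (starΩ (Γm b a))) :=
    Finset.sum_comm
  have main : (∑ a, ∑ c, r10 (gL a j) (r10 (gU c a) (Γp i c))) = Γp i j := by
    rw [Finset.sum_comm]
    calc (∑ c, ∑ a, r10 (gL a j) (r10 (gU c a) (Γp i c)))
        = ∑ c, r10 (P c j) (Γp i c) := by
          refine Finset.sum_congr rfl fun c _ => ?_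
          rw [← hgUgL]
          show _ = r10 (∑ a, gU c a * gL a j) _
          rw [hr_sum]
          exact Finset.sum_congr rfl fun a _ => (hrmul _ _ _).symm
      _ = Γp i j := hΓpP i j
  rw [key, cancel, main]
  abel
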